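/- arXiv:2605.26713 — 2 statements merged into one kernel-verified Lean document; each statement's English description precedes it below -/
import Mathlib

section
/- Let p be an L-Lipschitz probability density on ℝ, and fix a partition Γ = {a = γ_1 < γ_2 < ... < γ_{C+1} = b} of (a,b] with P(x ∉ (a,b]) = ε for some ε > 0. Let Δ_c = γ_{c+1} − γ_c and |Γ| = max_c Δ_c. Define the piecewise-constant density p̃(x) = Σ_{c=1}^C 1_{[γ_c, γ_{c+1})}(x) Δ_c⁻¹ ∫_{γ_c}^{γ_{c+1}} p(t)dt / (1−ε). Then the total variation distance satisfies TV(p, p̃) ≤ L|Γ|(b−a)/2 + ε. -/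
open MeasureTheory

/-- Discretization error of a Lipschitz density: binning on a partition of `(a,b]`
carrying mass `1 - ε` incurs total variation error at most `L|Γ|(b-a)/2 + ε`. -/
theorem tv_discretization {C : ℕ} [NeZero C] (p : ℝ → ℝ) (L : ℝ)
    (hp0 : ∀ x, 0 ≤ p x) (hpint : Integrable p) (hp1 : ∫ x, p x = 1)
    (hLip : ∀ x y, |p x - p y| ≤ L * |x - y|)
    (a b : ℝ) (hab : a < b)
    (γ : Fin (C + 1) → ℝ) (hmono : StrictMono γ)
    (hγ0 : γ 0 = a) (hγC : γ (Fin.last C) = b)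
    (ε : ℝ) (hε : 0 < ε)
    (hεdef : ∫ x in Set.Ioc a b, p x = 1 - ε)
    (pt : ℝ → ℝ)
    (hpt : ∀ x, pt x = ∑ c : Fin C,
      Set.indicator (Set.Ico (γ c.castSucc) (γ c.succ))
        (fun _ => (∫ t in Set.Ioc (γ c.castSucc) (γ c.succ), p t) /
          ((γ c.succ - γ c.castSucc) * (1 - ε))) x) :
    (1 / 2) * ∫ x, |p x - pt x| ≤
      L * (Finset.univ.sup' Finset.univ_nonempty
        (fun c : Fin C => γ c.succ - γ c.castSucc)) * (b - a) / 2 + ε := by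
  classical
  set Δ : Fin C → ℝ := fun c => γ c.succ - γ c.castSucc with hΔdef
  set m : Fin C → ℝ := fun c => ∫ t in Set.Ioc (γ c.castSucc) (γ c.succ), p t with hmdef
  set B : ℝ := Finset.univ.sup' Finset.univ_nonempty Δ with hBdef
  have hΔpos : ∀ c, 0 < Δ c := fun c => sub_pos.2 (hmono (Fin.castSucc_lt_succ (i := c)))
  have hL : 0 ≤ L := by
    have h := hLip 0 1
    have h0 : (0:ℝ) ≤ |p 0 - p 1| := abs_nonneg _
    simp at h; linarith
  have hε1 : ε ≤ 1 := by
    have : 0 ≤ ∫ x in Set.Ioc a b, p x :=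
      setIntegral_nonneg measurableSet_Ioc fun x _ => hp0 x
    linarith [hεdef ▸ this]
  have hm0 : ∀ c, 0 ≤ m c := fun c =>
    setIntegral_nonneg measurableSet_Ioc fun x _ => hp0 x
  have hlow : ∀ c : Fin C, a ≤ γ c.castSucc := fun c => hγ0 ▸ hmono.monotone (Fin.zero_le _)
  have hhigh : ∀ c : Fin C, γ c.succ ≤ b := fun c => hγC ▸ hmono.monotone (Fin.le_last _)
  have hmle : ∀ c, m c ≤ 1 - ε := by
    intro c
    rw [← hεdef]
    exact setIntegral_mono_set hpint.integrableOn
      (Filter.Eventually.of_forall fun x => hp0 x)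
      ((Set.Ioc_subset_Ioc (hlow c) (hhigh c)).eventuallyLE)
  -- ℕ-indexed partition points
  set φ : ℕ → ℝ := fun n => γ ⟨min n C, Nat.lt_succ_of_le (min_le_right _ _)⟩ with hφdef
  have hφc : ∀ c : Fin C, φ c.val = γ c.castSucc := by
    intro c
    simp only [hφdef]
    congr 1
    exact Fin.ext (by simp [min_eq_left c.isLt.le])
  have hφs : ∀ c : Fin C, φ (c.val + 1) = γ c.succ := by
    intro c
    simp only [hφdef]
    congr 1
    exact Fin.ext (by simp [min_eq_left (Nat.succ_le_of_lt c.isLt)])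
  have hφ0 : φ 0 = a := by
    rw [← hγ0]; simp only [hφdef]; congr 1
  have hφC : φ C = b := by
    rw [← hγC]; simp only [hφdef]; congr 1; exact Fin.ext (by simp [Fin.last])
  have hsumΔ : ∑ c : Fin C, Δ c = b - a := by
    have : ∀ c : Fin C, Δ c = (fun k : ℕ => φ (k + 1) - φ k) c.val := by
      intro c; simp [hφc c, hφs c, hΔdef]
    calc ∑ c : Fin C, Δ c = ∑ c : Fin C, (fun k : ℕ => φ (k + 1) - φ k) c.val :=
          Finset.sum_congr rfl fun c _ => this c
      _ = ∑ k ∈ Finset.range C, (φ (k + 1) - φ k) :=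
          Fin.sum_univ_eq_sum_range (fun k => φ (k + 1) - φ k) C
      _ = φ C - φ 0 := Finset.sum_range_sub _ _
      _ = b - a := by rw [hφ0, hφC]
  -- sum of interval integrals of an integrable function
  have hadj : ∀ g : ℝ → ℝ, Integrable g →
      ∑ c : Fin C, (∫ x in Set.Ioc (γ c.castSucc) (γ c.succ), g x) = ∫ x in Set.Ioc a b, g x := by
    intro g hg
    have h1 : ∀ c : Fin C, (∫ x in Set.Ioc (γ c.castSucc) (γ c.succ), g x)
        = (fun k : ℕ => ∫ x in φ k..φ (k + 1), g x) c.val := by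
      intro c
      simp only [hφc c, hφs c]
      rw [intervalIntegral.integral_of_le (hmono (Fin.castSucc_lt_succ (i := c))).le]
    calc ∑ c : Fin C, (∫ x in Set.Ioc (γ c.castSucc) (γ c.succ), g x)
        = ∑ c : Fin C, (fun k : ℕ => ∫ x in φ k..φ (k + 1), g x) c.val :=
          Finset.sum_congr rfl fun c _ => h1 c
      _ = ∑ k ∈ Finset.range C, ∫ x in φ k..φ (k + 1), g x :=
          Fin.sum_univ_eq_sum_range (fun k => ∫ x in φ k..φ (k + 1), g x) C
      _ = ∫ x in (φ 0)..(φ C), g x :=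
          intervalIntegral.sum_integral_adjacent_intervals fun k _ => hg.intervalIntegrable
      _ = ∫ x in Set.Ioc a b, g x := by
          rw [hφ0, hφC, intervalIntegral.integral_of_le hab.le]
  have hsumM : ∑ c : Fin C, m c = 1 - ε := by rw [← hεdef]; exact hadj p hpint
  -- integrability of pt
  have hptint : Integrable pt := by
    have : pt = fun x => ∑ c : Fin C,
        Set.indicator (Set.Ico (γ c.castSucc) (γ c.succ))
          (fun _ => m c / (Δ c * (1 - ε))) x := funext hpt
    rw [this]
    apply integrable_finset_sum
    intro c _
    rw [integrable_indicator_iff measurableSet_Ico]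
    exact integrableOn_const measure_Ico_lt_top.ne
  have hfint : Integrable (fun x => |p x - pt x|) := (hpint.sub hptint).abs
  -- outside contribution
  have hsub : ∀ c : Fin C, Set.Ico (γ c.castSucc) (γ c.succ) ⊆ Set.Ico a b :=
    fun c => Set.Ico_subset_Ico (hlow c) (hhigh c)
  have hout : ∫ x in (Set.Ico a b)ᶜ, |p x - pt x| = ε := by
    have hpt0 : ∀ x ∈ (Set.Ico a b)ᶜ, pt x = 0 := by
      intro x hx
      rw [hpt]
      exact Finset.sum_eq_zero fun c _ =>
        Set.indicator_of_notMem (fun h => hx (hsub c h)) _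
    have h1 : ∫ x in (Set.Ico a b)ᶜ, |p x - pt x| = ∫ x in (Set.Ico a b)ᶜ, p x := by
      apply setIntegral_congr_fun measurableSet_Ico.compl
      intro x hx
      dsimp only
      rw [hpt0 x hx, sub_zero, abs_of_nonneg (hp0 x)]
    have h2 : (∫ x in Set.Ico a b, p x) + ∫ x in (Set.Ico a b)ᶜ, p x = 1 := by
      rw [integral_add_compl measurableSet_Ico hpint, hp1]
    have h3 : ∫ x in Set.Ico a b, p x = 1 - ε := by
      rw [integral_Ico_eq_integral_Ioo, ← integral_Ioc_eq_integral_Ioo, hεdef]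
    rw [h1]; linarith
  -- pointwise bound on each bin
  have hbound : ∀ c : Fin C, ∀ x ∈ Set.Ico (γ c.castSucc) (γ c.succ),
      |p x - pt x| ≤ L * Δ c + (m c / Δ c) * (ε / (1 - ε)) := by
    intro c x hx
    have hΔc := hΔpos c
    have hptx : pt x = m c / (Δ c * (1 - ε)) := by
      rw [hpt, Finset.sum_eq_single c]
      · rw [Set.indicator_of_mem hx]
      · intro c' _ hne
        apply Set.indicator_of_notMem
        intro hx'
        rcases lt_or_gt_of_ne hne with h | h
        · have hle : γ c'.succ ≤ γ c.castSucc := by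
            apply hmono.monotone
            simp only [Fin.le_def, Fin.lt_def, Fin.val_succ, Fin.coe_castSucc] at h ⊢
            omega
          exact absurd hx'.2 (not_lt.2 (le_trans hle hx.1))
        · have hle : γ c.succ ≤ γ c'.castSucc := by
            apply hmono.monotone
            simp only [Fin.le_def, Fin.lt_def, Fin.val_succ, Fin.coe_castSucc] at h ⊢
            omega
          exact absurd hx.2 (not_lt.2 (le_trans hle hx'.1))
      · simp
    rw [hptx]
    have h1 : |p x - m c / Δ c| ≤ L * Δ c := by
      have hconst : ∫ _t in Set.Ioc (γ c.castSucc) (γ c.succ), p x = Δ c * p x := by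
        rw [setIntegral_const, measureReal_def, Real.volume_Ioc, ENNReal.toReal_ofReal (hΔpos c).le,
          smul_eq_mul]
      have hkey : p x * Δ c - m c
          = ∫ t in Set.Ioc (γ c.castSucc) (γ c.succ), (p x - p t) := by
        rw [integral_sub (integrableOn_const (C := p x) measure_Ioc_lt_top.ne)
          hpint.integrableOn, hconst, hmdef]
        ring
      have habs : |p x * Δ c - m c| ≤ L * Δ c * Δ c := by
        rw [hkey]
        calc |∫ t in Set.Ioc (γ c.castSucc) (γ c.succ), (p x - p t)|
            ≤ ∫ t in Set.Ioc (γ c.castSucc) (γ c.succ), |p x - p t| := by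
              simpa using norm_integral_le_integral_norm
                (μ := volume.restrict (Set.Ioc (γ c.castSucc) (γ c.succ)))
                (fun t => p x - p t)
          _ ≤ ∫ _t in Set.Ioc (γ c.castSucc) (γ c.succ), L * Δ c := by
              apply setIntegral_mono_on
              · exact ((integrableOn_const measure_Ioc_lt_top.ne).sub
                  hpint.integrableOn).abs
              · exact integrableOn_const measure_Ioc_lt_top.ne
              · exact measurableSet_Ioc
              · intro t ht
                refine le_trans (hLip x t) (mul_le_mul_of_nonneg_left ?_ hL)
                have hΔc' : Δ c = γ c.succ - γ c.castSucc := rfl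
                rw [abs_le, hΔc']
                exact ⟨by linarith [hx.1, ht.2], by linarith [hx.2, ht.1]⟩
          _ = L * Δ c * Δ c := by
              rw [setIntegral_const, measureReal_def, Real.volume_Ioc, ENNReal.toReal_ofReal (hΔpos c).le,
                smul_eq_mul]
              ring
      have heq : p x - m c / Δ c = (p x * Δ c - m c) / Δ c := by
        field_simp
      rw [heq, abs_div, abs_of_pos hΔc, div_le_iff₀ hΔc]
      calc |p x * Δ c - m c| ≤ L * Δ c * Δ c := habs
        _ = L * Δ c * Δ c := rfl
    have h2 : |m c / Δ c - m c / (Δ c * (1 - ε))| ≤ (m c / Δ c) * (ε / (1 - ε)) := by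
      rcases lt_or_ge ε 1 with hlt | hge
      · have h1ε : 0 < 1 - ε := by linarith
        have heq : m c / Δ c - m c / (Δ c * (1 - ε)) = -((m c / Δ c) * (ε / (1 - ε))) := by
          field_simp
          ring
        rw [heq, abs_neg, abs_of_nonneg]
        exact mul_nonneg (div_nonneg (hm0 c) hΔc.le) (div_nonneg hε.le h1ε.le)
      · have hε1' : ε = 1 := le_antisymm hε1 hge
        have hmc : m c = 0 := le_antisymm (by have := hmle c; rw [hε1'] at this; linarith)
          (hm0 c)
        simp [hmc]
    calc |p x - m c / (Δ c * (1 - ε))|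
        ≤ |p x - m c / Δ c| + |m c / Δ c - m c / (Δ c * (1 - ε))| := abs_sub_le _ _ _
      _ ≤ L * Δ c + (m c / Δ c) * (ε / (1 - ε)) := add_le_add h1 h2
  -- per-bin integral bound
  have hbin : ∀ c : Fin C, (∫ x in Set.Ioc (γ c.castSucc) (γ c.succ), |p x - pt x|)
      ≤ (L * Δ c + (m c / Δ c) * (ε / (1 - ε))) * Δ c := by
    intro c
    have hIcoIoc : (∫ x in Set.Ioc (γ c.castSucc) (γ c.succ), |p x - pt x|)
        = ∫ x in Set.Ico (γ c.castSucc) (γ c.succ), |p x - pt x| := by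
      rw [integral_Ioc_eq_integral_Ioo, integral_Ico_eq_integral_Ioo]
    rw [hIcoIoc]
    calc (∫ x in Set.Ico (γ c.castSucc) (γ c.succ), |p x - pt x|)
        ≤ ∫ _x in Set.Ico (γ c.castSucc) (γ c.succ),
            (L * Δ c + (m c / Δ c) * (ε / (1 - ε))) := by
          apply setIntegral_mono_on hfint.integrableOn
            (integrableOn_const measure_Ico_lt_top.ne) measurableSet_Ico
          exact hbound c
      _ = (L * Δ c + (m c / Δ c) * (ε / (1 - ε))) * Δ c := by
          rw [setIntegral_const, measureReal_def, Real.volume_Ico, ENNReal.toReal_ofReal (hΔpos c).le,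
            smul_eq_mul, mul_comm]
  -- inside contribution
  have hin : (∫ x in Set.Ioc a b, |p x - pt x|) ≤ L * B * (b - a) + ε := by
    have hsplit : (∫ x in Set.Ioc a b, |p x - pt x|)
        = ∑ c : Fin C, ∫ x in Set.Ioc (γ c.castSucc) (γ c.succ), |p x - pt x| :=
      (hadj _ hfint).symm
    rw [hsplit]
    have hterm : ∀ c : Fin C, (∫ x in Set.Ioc (γ c.castSucc) (γ c.succ), |p x - pt x|)
        ≤ L * B * Δ c + m c * (ε / (1 - ε)) := by
      intro c
      refine le_trans (hbin c) ?_
      have hBc : Δ c ≤ B := Finset.le_sup' Δ (Finset.mem_univ c)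
      have : (L * Δ c + (m c / Δ c) * (ε / (1 - ε))) * Δ c
          = L * Δ c * Δ c + m c * (ε / (1 - ε)) := by
        rw [add_mul, mul_right_comm (m c / Δ c), div_mul_cancel₀ _ (hΔpos c).ne']
      rw [this]
      exact add_le_add (mul_le_mul_of_nonneg_right
        (mul_le_mul_of_nonneg_left hBc hL) (hΔpos c).le) le_rfl
    calc (∑ c : Fin C, ∫ x in Set.Ioc (γ c.castSucc) (γ c.succ), |p x - pt x|)
        ≤ ∑ c : Fin C, (L * B * Δ c + m c * (ε / (1 - ε))) :=
          Finset.sum_le_sum fun c _ => hterm c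
      _ = L * B * (b - a) + (1 - ε) * (ε / (1 - ε)) := by
          rw [Finset.sum_add_distrib, ← Finset.mul_sum, hsumΔ, ← Finset.sum_mul, hsumM]
      _ ≤ L * B * (b - a) + ε := by
          rcases lt_or_ge ε 1 with hlt | hge
          · have h1ε : (1:ℝ) - ε ≠ 0 := by linarith
            rw [mul_div_cancel₀ _ h1ε]
          · have : ε = 1 := le_antisymm hε1 hge
            rw [this]; norm_num
  -- assemble
  have htotal : (∫ x, |p x - pt x|)
      = (∫ x in Set.Ico a b, |p x - pt x|) + ∫ x in (Set.Ico a b)ᶜ, |p x - pt x| :=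
    (integral_add_compl measurableSet_Ico hfint).symm
  have hIcoab : (∫ x in Set.Ico a b, |p x - pt x|) = ∫ x in Set.Ioc a b, |p x - pt x| := by
    rw [integral_Ico_eq_integral_Ioo, integral_Ioc_eq_integral_Ioo]
  have hfinal : (∫ x, |p x - pt x|) ≤ L * B * (b - a) + 2 * ε := by
    rw [htotal, hIcoab, hout]; linarith
  linarith
end

section
/- Let G ∈ ℝ^{n×n} be symmetric PSD, σ² > 0, 0 < η < 1/(λ_1(G) + σ²), Y ∈ ℝ^n and k_x ∈ ℝ^n. Define the test-point error e^(L)(x) = −k_xᵀ(I − η(G + σ²I))^L (G + σ²I)⁻¹ Y. Then |e^(L)(x)| ≤ exp(−η(λ_n(G) + σ²)L) · ‖k_x‖₂ ‖Y‖₂ / (λ_n(G) + σ²). -/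
open Matrix

/-- Euclidean norm on `Fin n → ℝ`. -/
noncomputable def enorm' {n : ℕ} (v : Fin n → ℝ) : ℝ := Real.sqrt (∑ i, v i ^ 2)

lemma enorm_nonneg {n : ℕ} (v : Fin n → ℝ) : 0 ≤ enorm' v := Real.sqrt_nonneg _

/-- Cauchy-Schwarz for absolute values. -/
lemma abs_sum_le_enorm {n : ℕ} (a b : Fin n → ℝ) :
    ∑ i, |a i| * |b i| ≤ enorm' a * enorm' b := by
  have h := Finset.sum_mul_sq_le_sq_mul_sq Finset.univ (fun i => |a i|) (fun i => |b i|)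
  have ha : ∑ i, |a i| ^ 2 = ∑ i, a i ^ 2 := by simp [sq_abs]
  have hb : ∑ i, |b i| ^ 2 = ∑ i, b i ^ 2 := by simp [sq_abs]
  rw [ha, hb] at h
  have hnn : 0 ≤ ∑ i, |a i| * |b i| :=
    Finset.sum_nonneg fun i _ => mul_nonneg (abs_nonneg _) (abs_nonneg _)
  calc ∑ i, |a i| * |b i| = Real.sqrt ((∑ i, |a i| * |b i|) ^ 2) := by
        rw [Real.sqrt_sq hnn]
    _ ≤ Real.sqrt ((∑ i, a i ^ 2) * ∑ i, b i ^ 2) := Real.sqrt_le_sqrt h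
    _ = enorm' a * enorm' b := by
        rw [enorm', enorm', ← Real.sqrt_mul (Finset.sum_nonneg fun i _ => sq_nonneg _)]

/-- Exponential decay of the test-point error of the Richardson recursion for KRR. -/
theorem test_point_error_bound {n : ℕ} [NeZero n]
    (G : Matrix (Fin n) (Fin n) ℝ) (hG : G.IsHermitian) (hpsd : G.PosSemidef)
    (σ2 η : ℝ) (hσ : 0 < σ2)
    (lam1 lamn : ℝ)
    (h1 : lam1 = Finset.univ.sup' Finset.univ_nonempty (fun i => hG.eigenvalues i))
    (hn : lamn = Finset.univ.inf' Finset.univ_nonempty (fun i => hG.eigenvalues i))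
    (hη0 : 0 < η) (hη1 : η < 1 / (lam1 + σ2))
    (Y kx : Fin n → ℝ) (L : ℕ) (e : ℝ)
    (he : e = -(kx ⬝ᵥ (((1 - η • (G + σ2 • (1 : Matrix (Fin n) (Fin n) ℝ))) ^ L *
      (G + σ2 • (1 : Matrix (Fin n) (Fin n) ℝ))⁻¹).mulVec Y))) :
    |e| ≤ Real.exp (-(η * (lamn + σ2)) * L) * enorm' kx * enorm' Y / (lamn + σ2) := by
  classical
  set U : Matrix (Fin n) (Fin n) ℝ := (hG.eigenvectorUnitary : Matrix (Fin n) (Fin n) ℝ) with hUdef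
  set ev : Fin n → ℝ := hG.eigenvalues with hev
  have hU1 : star U * U = 1 := Unitary.coe_star_mul_self hG.eigenvectorUnitary
  have hU2 : U * star U = 1 := Unitary.coe_mul_star_self hG.eigenvectorUnitary
  have hstarT : star U = Uᵀ := by
    ext i j; simp [Matrix.star_eq_conjTranspose, Matrix.conjTranspose_apply]
  -- eigenvalue facts
  have hev0 : ∀ i, 0 ≤ ev i := fun i => hpsd.eigenvalues_nonneg i
  have hevn : ∀ i, lamn ≤ ev i := fun i => hn ▸ Finset.inf'_le _ (Finset.mem_univ i)
  have hev1 : ∀ i, ev i ≤ lam1 := fun i => h1 ▸ Finset.le_sup' _ (Finset.mem_univ i)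
  have hlamn0 : 0 ≤ lamn := by
    obtain ⟨i, _, hi⟩ := Finset.exists_mem_eq_inf' (Finset.univ_nonempty (α := Fin n))
      (fun i => hG.eigenvalues i)
    rw [hn, hi]; exact hev0 i
  have hlamn_pos : 0 < lamn + σ2 := by linarith
  have hlam1_pos : 0 < lam1 + σ2 := by
    have := (hevn (Classical.arbitrary (Fin n))).trans (hev1 (Classical.arbitrary (Fin n)))
    linarith
  have hηlam1 : η * (lam1 + σ2) < 1 := by
    rw [lt_div_iff₀ hlam1_pos] at hη1; linarith [hη1]
  have hevpos : ∀ i, 0 < ev i + σ2 := fun i => by linarith [hev0 i]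
  -- spectral decomposition
  have hspec : G = U * diagonal ev * star U := by
    have h := hG.spectral_theorem
    simpa using h
  set A : Matrix (Fin n) (Fin n) ℝ := G + σ2 • (1 : Matrix (Fin n) (Fin n) ℝ) with hAdef
  have hconj1 : (1 : Matrix (Fin n) (Fin n) ℝ) = U * diagonal (fun _ => (1:ℝ)) * star U := by
    rw [Matrix.diagonal_one, mul_one, hU2]
  have hA : A = U * diagonal (fun i => ev i + σ2) * star U := by
    have hd : diagonal (fun i => ev i + σ2)
        = diagonal ev + σ2 • (1 : Matrix (Fin n) (Fin n) ℝ) := by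
      ext i j
      by_cases h : i = j <;> simp [Matrix.diagonal_apply, Matrix.one_apply, h]
    rw [hAdef, hd, Matrix.mul_add, Matrix.add_mul, ← hspec]
    congr 1
    rw [Matrix.mul_smul, Matrix.smul_mul, mul_one, hU2]
  have hone : (1 : Matrix (Fin n) (Fin n) ℝ) - η • A
      = U * diagonal (fun i => 1 - η * (ev i + σ2)) * star U := by
    have hd : diagonal (fun i => 1 - η * (ev i + σ2))
        = (1 : Matrix (Fin n) (Fin n) ℝ) - η • diagonal (fun i => ev i + σ2) := by
      ext i j
      by_cases h : i = j <;> simp [Matrix.diagonal_apply, Matrix.one_apply, h]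
    rw [hd, Matrix.mul_sub, Matrix.sub_mul, mul_one, hU2, Matrix.mul_smul, Matrix.smul_mul, ← hA]
  have hconjmul : ∀ d d' : Fin n → ℝ,
      (U * diagonal d * star U) * (U * diagonal d' * star U)
        = U * diagonal (fun i => d i * d' i) * star U := by
    intro d d'
    calc (U * diagonal d * star U) * (U * diagonal d' * star U)
        = U * diagonal d * (star U * U) * (diagonal d' * star U) := by
          simp only [Matrix.mul_assoc]
      _ = U * (diagonal d * diagonal d') * star U := by
          rw [hU1, Matrix.mul_one]; simp only [Matrix.mul_assoc]
      _ = U * diagonal (fun i => d i * d' i) * star U := by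
          rw [Matrix.diagonal_mul_diagonal]
  have hpow : ∀ (d : Fin n → ℝ) (m : ℕ),
      (U * diagonal d * star U) ^ m = U * diagonal (fun i => d i ^ m) * star U := by
    intro d m
    induction m with
    | zero => simp only [pow_zero]; rw [← hconj1]
    | succ m ih =>
        have hde : (fun i => d i ^ (m + 1)) = fun i => d i ^ m * d i :=
          funext fun i => pow_succ _ _
        rw [pow_succ, ih, hconjmul, hde]
  have hAinv : A⁻¹ = U * diagonal (fun i => (ev i + σ2)⁻¹) * star U := by
    apply Matrix.inv_eq_right_inv
    rw [hA, hconjmul]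
    have : (fun i => (ev i + σ2) * (ev i + σ2)⁻¹) = fun _ => (1:ℝ) := by
      ext i; exact mul_inv_cancel₀ (hevpos i).ne'
    rw [this, ← hconj1]
  set f : Fin n → ℝ := fun i => (1 - η * (ev i + σ2)) ^ L * (ev i + σ2)⁻¹ with hf
  have hM : ((1 : Matrix (Fin n) (Fin n) ℝ) - η • A) ^ L * A⁻¹ = U * diagonal f * star U := by
    rw [hone, hpow, hAinv, hconjmul]
  -- rewrite e as a sum
  set a : Fin n → ℝ := star U *ᵥ kx with ha
  set b : Fin n → ℝ := star U *ᵥ Y with hb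
  have hvm : kx ᵥ* U = a := by
    ext i
    simp only [ha, Matrix.vecMul, Matrix.mulVec, dotProduct, hstarT,
      Matrix.transpose_apply]
    exact Finset.sum_congr rfl fun j _ => mul_comm _ _
  have hesum : e = -(∑ i, a i * (f i * b i)) := by
    rw [he, hM]
    congr 1
    rw [← Matrix.mulVec_mulVec, ← Matrix.mulVec_mulVec, Matrix.dotProduct_mulVec, hvm]
    simp only [dotProduct]
    exact Finset.sum_congr rfl fun i _ => by rw [Matrix.mulVec_diagonal]
  -- norm preservation
  have hnorm : ∀ v : Fin n → ℝ, ∑ i, (star U *ᵥ v) i ^ 2 = ∑ i, v i ^ 2 := by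
    intro v
    have h1' : star U *ᵥ v = v ᵥ* (star U)ᵀ := (Matrix.vecMul_transpose _ _).symm
    have key : (star U *ᵥ v) ⬝ᵥ (star U *ᵥ v) = v ⬝ᵥ v := by
      nth_rewrite 1 [h1']
      rw [Matrix.dotProduct_mulVec, Matrix.vecMul_vecMul]
      have hTU : (star U)ᵀ * star U = 1 := by
        rw [hstarT, Matrix.transpose_transpose, ← hstarT]
        exact hU2
      rw [hTU, Matrix.vecMul_one]
    simpa only [dotProduct, ← sq] using key
  -- bound on f
  have hfb : ∀ i, |f i| ≤ Real.exp (-(η * (lamn + σ2)) * L) / (lamn + σ2) := by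
    intro i
    have h1i : 0 ≤ 1 - η * (ev i + σ2) := by
      have : η * (ev i + σ2) ≤ η * (lam1 + σ2) :=
        mul_le_mul_of_nonneg_left (by linarith [hev1 i]) hη0.le
      linarith
    have h2i : 1 - η * (ev i + σ2) ≤ Real.exp (-(η * (lamn + σ2))) := by
      have : 1 - η * (ev i + σ2) ≤ 1 - η * (lamn + σ2) := by
        have : η * (lamn + σ2) ≤ η * (ev i + σ2) :=
          mul_le_mul_of_nonneg_left (by linarith [hevn i]) hη0.le
        linarith
      calc 1 - η * (ev i + σ2) ≤ 1 - η * (lamn + σ2) := this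
        _ ≤ Real.exp (-(η * (lamn + σ2))) := by
            have := Real.add_one_le_exp (-(η * (lamn + σ2))); linarith
    have hpowle : (1 - η * (ev i + σ2)) ^ L ≤ Real.exp (-(η * (lamn + σ2)) * L) := by
      calc (1 - η * (ev i + σ2)) ^ L ≤ (Real.exp (-(η * (lamn + σ2)))) ^ L :=
            pow_le_pow_left₀ h1i h2i L
        _ = Real.exp (-(η * (lamn + σ2)) * L) := by
            rw [← Real.exp_nat_mul, mul_comm]
    have hinvle : (ev i + σ2)⁻¹ ≤ (lamn + σ2)⁻¹ := by
      apply inv_anti₀ hlamn_pos (by linarith [hevn i])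
    have hfnn : 0 ≤ f i := mul_nonneg (pow_nonneg h1i L) (inv_nonneg.mpr (hevpos i).le)
    rw [abs_of_nonneg hfnn, hf, div_eq_mul_inv]
    exact mul_le_mul hpowle hinvle (inv_nonneg.mpr (hevpos i).le) (Real.exp_pos _).le
  -- combine
  set C : ℝ := Real.exp (-(η * (lamn + σ2)) * L) / (lamn + σ2) with hC
  have hC0 : 0 ≤ C := div_nonneg (Real.exp_pos _).le hlamn_pos.le
  have habs : |e| ≤ C * (enorm' a * enorm' b) := by
    rw [hesum, abs_neg]
    calc |∑ i, a i * (f i * b i)| ≤ ∑ i, |a i * (f i * b i)| :=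
          Finset.abs_sum_le_sum_abs _ _
      _ = ∑ i, |f i| * (|a i| * |b i|) := by
          refine Finset.sum_congr rfl fun i _ => ?_
          rw [abs_mul, abs_mul]; ring
      _ ≤ ∑ i, C * (|a i| * |b i|) := by
          refine Finset.sum_le_sum fun i _ => ?_
          exact mul_le_mul_of_nonneg_right (hfb i)
            (mul_nonneg (abs_nonneg _) (abs_nonneg _))
      _ = C * ∑ i, |a i| * |b i| := by rw [← Finset.mul_sum]
      _ ≤ C * (enorm' a * enorm' b) :=
          mul_le_mul_of_nonneg_left (abs_sum_le_enorm a b) hC0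
  have hea : enorm' a = enorm' kx := by rw [enorm', enorm', ha, hnorm]
  have heb : enorm' b = enorm' Y := by rw [enorm', enorm', hb, hnorm]
  rw [hea, heb] at habs
  calc |e| ≤ C * (enorm' kx * enorm' Y) := habs
    _ = Real.exp (-(η * (lamn + σ2)) * L) * enorm' kx * enorm' Y / (lamn + σ2) := by
        rw [hC]; ring
end
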